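/- Let n ≥ 4 be an integer, let (X, d) be a pseudometric space equipped with a measure μ, and let w : X → [0,∞] be a measurable function. For R > 0 and x ∈ X define the weighted energy Φ(R, x) = R^{4−n} (4π)^{−n/2} ∫_X w(y) · exp( − d(x,y)² / (4R²) ) dμ(y). Then for every ε > 0 there is a constant C = C(ε, n) > 0 such that whenever R > 0, R/2 ≤ R₁ ≤ 3R/2, and d(x, x₁) ≤ R, one has Φ(R₁, x) ≤ C · Φ(R, x₁) + ε · Φ(2R, x₁). -/

import Mathlib

open MeasureTheory

lemma zpow_anti_base {a b : ℝ} (ha : 0 < a) (hab : a ≤ b) {m : ℤ} (hm : m ≤ 0) :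
    b ^ m ≤ a ^ m := by
  obtain ⟨k, rfl⟩ : ∃ k : ℕ, m = -(k:ℤ) := ⟨m.natAbs, by omega⟩
  rw [zpow_neg, zpow_neg, zpow_natCast, zpow_natCast]
  gcongr

lemma key_real (n : ℕ) (ε : ℝ) (hε : 0 < ε) :
    ∃ C > (0:ℝ), ∀ s : ℝ, 0 ≤ s →
      (2:ℝ) ^ ((n:ℤ) - 4) * Real.exp (-(max (s-1) 0)^2/9)
        ≤ C * Real.exp (-s^2/4) + ε * (2:ℝ) ^ ((4:ℤ) - (n:ℤ)) * Real.exp (-s^2/16) := by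
  set K : ℝ := (2:ℝ) ^ ((n:ℤ) - 4) with hKdef
  set B : ℝ := (2:ℝ) ^ ((4:ℤ) - (n:ℤ)) with hBdef
  have hK : 0 < K := zpow_pos (by norm_num) _
  have hB : 0 < B := zpow_pos (by norm_num) _
  set L : ℝ := Real.log (K / (ε * B)) with hLdef
  set s₀ : ℝ := 6 + Real.sqrt (144 * max L 0) with hs₀def
  have hs₀6 : 6 ≤ s₀ := le_add_of_nonneg_right (Real.sqrt_nonneg _)
  refine ⟨K * Real.exp (s₀^2/4), by positivity, ?_⟩
  intro s hs
  have hεBe : 0 ≤ ε * B * Real.exp (-s^2/16) := by positivity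
  rcases le_total s s₀ with h | h
  · have h1 : Real.exp (-(max (s-1) 0)^2/9) ≤ 1 := by
      apply Real.exp_le_one_iff.mpr
      have : (0:ℝ) ≤ (max (s-1) 0)^2 := sq_nonneg _
      linarith
    have h2 : (1:ℝ) ≤ Real.exp (s₀^2/4) * Real.exp (-s^2/4) := by
      rw [← Real.exp_add]
      apply Real.one_le_exp_iff.mpr
      nlinarith
    nlinarith [hK, mul_le_mul_of_nonneg_left h1 hK.le,
      mul_le_mul_of_nonneg_left h2 hK.le]
  · have hs6 : 6 ≤ s := le_trans hs₀6 h
    have hmax : max (s-1) 0 = s - 1 := max_eq_left (by linarith)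
    rw [hmax]
    have hsq : 144 * max L 0 ≤ (s - 6)^2 := by
      have h' : Real.sqrt (144 * max L 0) ≤ s - 6 := by
        simp only [hs₀def] at h; linarith
      have := Real.sq_sqrt (by positivity : (0:ℝ) ≤ 144 * max L 0)
      nlinarith [Real.sqrt_nonneg (144 * max L 0)]
    have hL : 144 * L ≤ 144 * max L 0 := by
      have := le_max_left L (0:ℝ); linarith
    have hV : L ≤ (s-1)^2/9 - s^2/16 := by nlinarith
    have hKB : K ≤ ε * B * Real.exp ((s-1)^2/9 - s^2/16) := by
      have hlog : K / (ε * B) ≤ Real.exp ((s-1)^2/9 - s^2/16) := by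
        calc K / (ε * B) = Real.exp L := (Real.exp_log (by positivity)).symm
        _ ≤ _ := Real.exp_le_exp.mpr hV
      calc K = (ε * B) * (K / (ε * B)) := by field_simp
      _ ≤ (ε * B) * Real.exp ((s-1)^2/9 - s^2/16) :=
          mul_le_mul_of_nonneg_left hlog (by positivity)
    have hmain : K * Real.exp (-(s-1)^2/9) ≤ ε * B * Real.exp (-s^2/16) := by
      have heq : ε * B * Real.exp ((s-1)^2/9 - s^2/16) * Real.exp (-(s-1)^2/9)
          = ε * B * Real.exp (-s^2/16) := by
        rw [mul_assoc, ← Real.exp_add]; ring_nf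
      calc K * Real.exp (-(s-1)^2/9)
          ≤ ε * B * Real.exp ((s-1)^2/9 - s^2/16) * Real.exp (-(s-1)^2/9) :=
            mul_le_mul_of_nonneg_right hKB (Real.exp_pos _).le
        _ = _ := heq
    have : (0:ℝ) ≤ K * Real.exp (s₀^2/4) * Real.exp (-s^2/4) := by positivity
    linarith

lemma pointwise_core (n : ℕ) (hn : 4 ≤ n) (ε C : ℝ)
    (hkey : ∀ s : ℝ, 0 ≤ s →
      (2:ℝ) ^ ((n:ℤ) - 4) * Real.exp (-(max (s-1) 0)^2/9)
        ≤ C * Real.exp (-s^2/4) + ε * (2:ℝ) ^ ((4:ℤ) - (n:ℤ)) * Real.exp (-s^2/16))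
    (t d R R₁ : ℝ) (ht : 0 ≤ t) (hd : 0 ≤ d) (htd : t - R ≤ d)
    (hR : 0 < R) (h1 : R / 2 ≤ R₁) (h2 : R₁ ≤ 3 * R / 2) :
    R₁ ^ ((4:ℤ) - (n:ℤ)) * Real.exp (-d^2/(4*R₁^2))
      ≤ C * (R ^ ((4:ℤ) - (n:ℤ)) * Real.exp (-t^2/(4*R^2)))
        + ε * ((2*R) ^ ((4:ℤ) - (n:ℤ)) * Real.exp (-t^2/(4*(2*R)^2))) := by
  have hR₁ : 0 < R₁ := lt_of_lt_of_le (by positivity) h1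
  set m : ℤ := (4:ℤ) - (n:ℤ) with hm
  have hmneg : m ≤ 0 := by omega
  set s : ℝ := t / R with hs
  have hs0 : 0 ≤ s := by positivity
  set m0 : ℝ := max (s - 1) 0 with hm0
  have hz : R₁ ^ m ≤ (2:ℝ) ^ ((n:ℤ) - 4) * R ^ m := by
    have h' : R₁ ^ m ≤ (R/2) ^ m := zpow_anti_base (by positivity) h1 hmneg
    calc R₁ ^ m ≤ (R/2) ^ m := h'
      _ = (2:ℝ) ^ ((n:ℤ) - 4) * R ^ m := by
          rw [div_zpow, div_eq_mul_inv, ← zpow_neg, mul_comm]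
          norm_num [hm]
  have hRm0 : R * m0 ≤ d := by
    rcases max_cases (s - 1) 0 with ⟨h', _⟩ | ⟨h', _⟩ <;> rw [hm0, h']
    · have heq : R * (t/R - 1) = t - R := by field_simp
      rw [hs, heq]; exact htd
    · simpa using hd
  have hm0nn : 0 ≤ m0 := le_max_right _ _
  have hsqA : (R * m0)^2 ≤ d^2 := pow_le_pow_left₀ (by positivity) hRm0 2
  have hsqB : 4 * R₁^2 ≤ 9 * R^2 := by nlinarith
  have hexp : Real.exp (-d^2/(4*R₁^2)) ≤ Real.exp (-m0^2/9) := by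
    apply Real.exp_le_exp.mpr
    rw [neg_div, neg_div, neg_le_neg_iff, div_le_div_iff₀ (by norm_num) (by positivity)]
    nlinarith [mul_le_mul_of_nonneg_left hsqB (sq_nonneg m0)]
  have he2 : -t^2/(4*R^2) = -s^2/4 := by rw [hs]; field_simp
  have he3 : -t^2/(4*(2*R)^2) = -s^2/16 := by rw [hs]; field_simp; ring
  have h2Rm : (2*R:ℝ) ^ m = (2:ℝ) ^ m * R ^ m := mul_zpow 2 R m
  have hkey' := hkey s hs0
  have hRmnn : (0:ℝ) ≤ R ^ m := (zpow_pos hR m).le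
  calc R₁ ^ m * Real.exp (-d^2/(4*R₁^2))
      ≤ ((2:ℝ) ^ ((n:ℤ) - 4) * R ^ m) * Real.exp (-m0^2/9) := by
        apply mul_le_mul hz hexp (Real.exp_pos _).le
        positivity
    _ = R ^ m * ((2:ℝ) ^ ((n:ℤ) - 4) * Real.exp (-m0^2/9)) := by ring
    _ ≤ R ^ m * (C * Real.exp (-s^2/4) + ε * (2:ℝ) ^ ((4:ℤ) - (n:ℤ)) * Real.exp (-s^2/16)) :=
        mul_le_mul_of_nonneg_left hkey' hRmnn
    _ = C * (R ^ m * Real.exp (-t^2/(4*R^2)))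
        + ε * ((2*R) ^ m * Real.exp (-t^2/(4*(2*R)^2))) := by
        rw [he2, he3, h2Rm, ← hm]; ring

/-- The weighted energy `Φ(R, x) = R^{4−n} (4π)^{−n/2} ∫ w(y) exp(−d(x,y)²/(4R²)) dμ(y)`
of a nonnegative density `w` on a pseudometric measure space. -/
noncomputable def weightedEnergy (n : ℕ) {X : Type} [PseudoMetricSpace X]
    [MeasurableSpace X] (μ : Measure X) (w : X → ENNReal) (R : ℝ) (x : X) : ENNReal :=
  ENNReal.ofReal (R ^ ((4 : ℤ) - (n : ℤ)) * (4 * Real.pi) ^ (-(n : ℝ) / 2)) *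
    ∫⁻ y, w y * ENNReal.ofReal (Real.exp (-(dist x y) ^ 2 / (4 * R ^ 2))) ∂μ


lemma lintegral_add_le_of_comonotone {α : Type} [MeasurableSpace α] (μ : Measure α)
    (f g : α → ENNReal)
    (hco : ∀ y z, (f y ≤ f z ∧ g y ≤ g z) ∨ (f z ≤ f y ∧ g z ≤ g y)) :
    ∫⁻ y, (f y + g y) ∂μ ≤ (∫⁻ y, f y ∂μ) + ∫⁻ y, g y ∂μ := by
  rw [MeasureTheory.lintegral]
  refine iSup₂_le fun φ hφ => ?_
  set F : ENNReal → ENNReal := fun c => ⨅ z : {z // φ z = c}, f z.1 with hF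
  set G : ENNReal → ENNReal := fun c => ⨅ z : {z // φ z = c}, g z.1 with hG
  have hFle : ∀ y, F (φ y) ≤ f y := fun y => iInf_le (fun z : {z // φ z = φ y} => f z.1) ⟨y, rfl⟩
  have hGle : ∀ y, G (φ y) ≤ g y := fun y => iInf_le (fun z : {z // φ z = φ y} => g z.1) ⟨y, rfl⟩
  have hsplit : ∀ y, φ y ≤ F (φ y) + G (φ y) := by
    intro y
    have hne : Nonempty {z // φ z = φ y} := ⟨⟨y, rfl⟩⟩
    have step : φ y ≤ ⨅ (z₁ : {z // φ z = φ y}) (z₂ : {z // φ z = φ y}), (f z₁.1 + g z₂.1) := by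
      refine le_iInf fun z₁ => le_iInf fun z₂ => ?_
      rcases hco z₁.1 z₂.1 with ⟨h1, h2⟩ | ⟨h1, h2⟩
      · calc φ y = φ z₁.1 := z₁.2.symm
          _ ≤ f z₁.1 + g z₁.1 := hφ z₁.1
          _ ≤ f z₁.1 + g z₂.1 := add_le_add_right h2 _
      · calc φ y = φ z₂.1 := z₂.2.symm
          _ ≤ f z₂.1 + g z₂.1 := hφ z₂.1
          _ ≤ f z₁.1 + g z₂.1 := add_le_add_left h1 _
    refine step.trans_eq ?_
    rw [hF, hG, ENNReal.iInf_add]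
    exact (iInf_congr fun z₁ => ENNReal.add_iInf).symm
  have hφF : ⇑(φ.map F) ≤ f := fun y => by
    simpa [SimpleFunc.map_apply] using hFle y
  have hφG : ⇑(φ.map G) ≤ g := fun y => by
    simpa [SimpleFunc.map_apply] using hGle y
  have hmono : φ.lintegral μ ≤ (φ.map F + φ.map G).lintegral μ := by
    refine SimpleFunc.lintegral_mono (fun y => ?_) le_rfl
    simpa [SimpleFunc.map_apply] using hsplit y
  rw [SimpleFunc.add_lintegral] at hmono
  refine hmono.trans (add_le_add ?_ ?_)
  · rw [← SimpleFunc.lintegral_eq_lintegral]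
    exact lintegral_mono hφF
  · rw [← SimpleFunc.lintegral_eq_lintegral]
    exact lintegral_mono hφG

theorem weightedEnergy_comparison (n : ℕ) (hn : 4 ≤ n) :
    ∀ ε > (0 : ℝ), ∃ C > (0 : ℝ),
      ∀ (X : Type) (_ : PseudoMetricSpace X) (_ : MeasurableSpace X)
        (μ : Measure X) (w : X → ENNReal), Measurable w →
        ∀ (x x₁ : X) (R R₁ : ℝ),
          0 < R → R / 2 ≤ R₁ → R₁ ≤ 3 * R / 2 → dist x x₁ ≤ R →
          weightedEnergy n μ w R₁ x ≤
            ENNReal.ofReal C * weightedEnergy n μ w R x₁ +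
              ENNReal.ofReal ε * weightedEnergy n μ w (2 * R) x₁ := by
  intro ε hε
  obtain ⟨C, hC, hkey⟩ := key_real n ε hε
  refine ⟨C, hC, ?_⟩
  intro X _ _ μ w hw x x₁ R R₁ hR hRa hRb hdx
  have hR₁ : 0 < R₁ := lt_of_lt_of_le (by positivity) hRa
  set A : ℝ := (4 * Real.pi) ^ (-(n : ℝ) / 2) with hA
  have hApos : 0 < A := Real.rpow_pos_of_pos (by positivity) _
  set m : ℤ := (4:ℤ) - (n:ℤ) with hm
  have hpre : ∀ r : ℝ, 0 < r → 0 < r ^ m * A := fun r hr => by positivity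
  -- pointwise real inequality including the (4π) factor
  have hreal : ∀ y : X,
      (R₁ ^ m * A) * Real.exp (-(dist x y)^2/(4*R₁^2))
        ≤ C * ((R ^ m * A) * Real.exp (-(dist x₁ y)^2/(4*R^2)))
          + ε * (((2*R) ^ m * A) * Real.exp (-(dist x₁ y)^2/(4*(2*R)^2))) := by
    intro y
    have htd : dist x₁ y - R ≤ dist x y := by
      have h3 := dist_triangle x₁ x y
      rw [dist_comm x₁ x] at h3
      linarith
    have hcore := pointwise_core n hn ε C hkey (dist x₁ y) (dist x y) R R₁
      dist_nonneg dist_nonneg htd hR hRa hRb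
    have h' := mul_le_mul_of_nonneg_right hcore hApos.le
    calc (R₁ ^ m * A) * Real.exp (-(dist x y)^2/(4*R₁^2))
        = (R₁ ^ m * Real.exp (-(dist x y)^2/(4*R₁^2))) * A := by ring
      _ ≤ (C * (R ^ m * Real.exp (-(dist x₁ y)^2/(4*R^2)))
          + ε * ((2*R) ^ m * Real.exp (-(dist x₁ y)^2/(4*(2*R)^2)))) * A := h'
      _ = _ := by ring
  simp only [weightedEnergy, ← hA, ← hm]
  by_cases hfin : ∀ᵐ y ∂μ, w y < ⊤
  · -- move `w` into the measure
    set ν : Measure X := μ.withDensity w with hν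
    have hwd : ∀ f : X → ENNReal,
        ∫⁻ y, w y * f y ∂μ = ∫⁻ y, f y ∂ν := by
      intro f
      rw [hν, lintegral_withDensity_eq_lintegral_mul_non_measurable μ hw hfin f]
      rfl
    rw [hwd, hwd, hwd]
    set F : X → ENNReal :=
      fun y => ENNReal.ofReal (C * ((R ^ m * A) * Real.exp (-(dist x₁ y)^2/(4*R^2)))) with hF
    set G : X → ENNReal :=
      fun y => ENNReal.ofReal (ε * (((2*R) ^ m * A) * Real.exp (-(dist x₁ y)^2/(4*(2*R)^2)))) with hG
    have hstep : ∀ y z : X, dist x₁ y ≤ dist x₁ z → F z ≤ F y ∧ G z ≤ G y := by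
      intro y z h
      have hsq : (dist x₁ y)^2 ≤ (dist x₁ z)^2 := pow_le_pow_left₀ dist_nonneg h 2
      have hdiv : ∀ c : ℝ, 0 < c → -(dist x₁ z)^2/c ≤ -(dist x₁ y)^2/c := by
        intro c hc
        rw [div_eq_mul_inv, div_eq_mul_inv]
        exact mul_le_mul_of_nonneg_right (neg_le_neg hsq) (inv_nonneg.mpr hc.le)
      constructor
      · refine ENNReal.ofReal_le_ofReal ?_
        refine mul_le_mul_of_nonneg_left ?_ hC.le
        refine mul_le_mul_of_nonneg_left ?_ (hpre R hR).le
        exact Real.exp_le_exp.mpr (hdiv _ (by positivity))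
      · refine ENNReal.ofReal_le_ofReal ?_
        refine mul_le_mul_of_nonneg_left ?_ hε.le
        refine mul_le_mul_of_nonneg_left ?_ (hpre (2*R) (by positivity)).le
        exact Real.exp_le_exp.mpr (hdiv _ (by positivity))
    have hco : ∀ y z, (F y ≤ F z ∧ G y ≤ G z) ∨ (F z ≤ F y ∧ G z ≤ G y) := by
      intro y z
      rcases le_total (dist x₁ y) (dist x₁ z) with h | h
      · exact Or.inr (hstep y z h)
      · exact Or.inl (hstep z y h)
    have hpt : ∀ y : X,
        ENNReal.ofReal (R₁ ^ m * A) * ENNReal.ofReal (Real.exp (-(dist x y)^2/(4*R₁^2)))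
          ≤ F y + G y := by
      intro y
      calc ENNReal.ofReal (R₁ ^ m * A) * ENNReal.ofReal (Real.exp (-(dist x y)^2/(4*R₁^2)))
          = ENNReal.ofReal ((R₁ ^ m * A) * Real.exp (-(dist x y)^2/(4*R₁^2))) :=
            (ENNReal.ofReal_mul (hpre R₁ hR₁).le).symm
        _ ≤ ENNReal.ofReal (C * ((R ^ m * A) * Real.exp (-(dist x₁ y)^2/(4*R^2)))
            + ε * (((2*R) ^ m * A) * Real.exp (-(dist x₁ y)^2/(4*(2*R)^2)))) :=
            ENNReal.ofReal_le_ofReal (hreal y)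
        _ = F y + G y := by
            rw [ENNReal.ofReal_add (mul_nonneg hC.le (by positivity))
              (mul_nonneg hε.le (by positivity))]
    have hch2 : ∫⁻ y, F y ∂ν = ENNReal.ofReal C * (ENNReal.ofReal (R ^ m * A) *
        ∫⁻ y, ENNReal.ofReal (Real.exp (-(dist x₁ y)^2/(4*R^2))) ∂ν) := by
      calc ∫⁻ y, F y ∂ν
          = ∫⁻ y, ENNReal.ofReal C * (ENNReal.ofReal (R ^ m * A) *
              ENNReal.ofReal (Real.exp (-(dist x₁ y)^2/(4*R^2)))) ∂ν :=
            lintegral_congr fun y => by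
              simp only [hF, ENNReal.ofReal_mul hC.le, ENNReal.ofReal_mul (hpre R hR).le]
        _ = _ := by
            rw [lintegral_const_mul' _ _ ENNReal.ofReal_ne_top,
              lintegral_const_mul' _ _ ENNReal.ofReal_ne_top]
    have hch3 : ∫⁻ y, G y ∂ν = ENNReal.ofReal ε * (ENNReal.ofReal ((2*R) ^ m * A) *
        ∫⁻ y, ENNReal.ofReal (Real.exp (-(dist x₁ y)^2/(4*(2*R)^2))) ∂ν) := by
      calc ∫⁻ y, G y ∂ν
          = ∫⁻ y, ENNReal.ofReal ε * (ENNReal.ofReal ((2*R) ^ m * A) *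
              ENNReal.ofReal (Real.exp (-(dist x₁ y)^2/(4*(2*R)^2)))) ∂ν :=
            lintegral_congr fun y => by
              simp only [hG, ENNReal.ofReal_mul hε.le, ENNReal.ofReal_mul (hpre (2*R) (by positivity)).le]
        _ = _ := by
            rw [lintegral_const_mul' _ _ ENNReal.ofReal_ne_top,
              lintegral_const_mul' _ _ ENNReal.ofReal_ne_top]
    calc ENNReal.ofReal (R₁ ^ m * A) *
          ∫⁻ y, ENNReal.ofReal (Real.exp (-(dist x y)^2/(4*R₁^2))) ∂ν
        = ∫⁻ y, ENNReal.ofReal (R₁ ^ m * A) *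
            ENNReal.ofReal (Real.exp (-(dist x y)^2/(4*R₁^2))) ∂ν :=
          (lintegral_const_mul' _ _ ENNReal.ofReal_ne_top).symm
      _ ≤ ∫⁻ y, (F y + G y) ∂ν := lintegral_mono hpt
      _ ≤ (∫⁻ y, F y ∂ν) + ∫⁻ y, G y ∂ν := lintegral_add_le_of_comonotone ν F G hco
      _ = _ := by rw [hch2, hch3]
  · -- the density is infinite on a set of positive measure: RHS is infinite
    have hS0 : μ {y | ¬ w y < ⊤} ≠ 0 := by
      intro h0
      exact hfin (by rwa [MeasureTheory.ae_iff])
    have hSm : MeasurableSet {y | ¬ w y < ⊤} := (measurableSet_lt hw measurable_const).compl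
    have hint : ∫⁻ y, w y * ENNReal.ofReal (Real.exp (-(dist x₁ y)^2/(4*R^2))) ∂μ = ⊤ := by
      refine top_unique ?_
      calc (⊤:ENNReal) = ⊤ * μ {y | ¬ w y < ⊤} := (ENNReal.top_mul hS0).symm
        _ = ∫⁻ y, ({y | ¬ w y < ⊤}).indicator (fun _ => (⊤:ENNReal)) y ∂μ := by
            rw [lintegral_indicator hSm, setLIntegral_const]
        _ ≤ _ := by
            refine lintegral_mono fun y => ?_
            by_cases hy : y ∈ {y | ¬ w y < ⊤}
            · rw [Set.indicator_of_mem hy]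
              have hwy : w y = ⊤ := by
                have := hy
                simp only [Set.mem_setOf_eq, not_lt, top_le_iff] at this
                exact this
              rw [hwy, ENNReal.top_mul]
              exact (ENNReal.ofReal_pos.mpr (Real.exp_pos _)).ne'
            · rw [Set.indicator_of_notMem hy]
              exact zero_le
    rw [hint, ENNReal.mul_top, ENNReal.mul_top, top_add]
    · exact le_top
    · exact (ENNReal.ofReal_pos.mpr hC).ne'
    · exact (ENNReal.ofReal_pos.mpr (hpre R hR)).ne'
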